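/- For O = S = 2, the number of equivalence classes of deterministic strategies of length L under relabeling of outcomes and of measurement settings equals (1/2)(4^{2^L − 2} + 4^{2^{L−1} − 1}). -/
import Mathlib


/-- A node of the complete binary tree of depth `L-1`: an input history of
length `l < L`, inputs labelled by `ZMod 2`. -/
abbrev BinNode (L : ℕ) := (l : Fin L) × (Fin (l : ℕ) → ZMod 2)

/-- A deterministic strategy for `O = S = 2`: each node carries a tuple in
`{0,1}^2`, settings and outcomes labelled by `ZMod 2`. -/
abbrev DetStrategy22 (L : ℕ) := BinNode L → (ZMod 2 → ZMod 2)

/-- Relabeling equivalence: `s'` is obtained from `s` by possibly exchanging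
the two settings (`e = 1`: swap tuple components and tree branches
simultaneously) and flipping the outcomes of each setting uniformly at all
nodes (`c`). -/
def REquiv22 (L : ℕ) (s s' : DetStrategy22 L) : Prop :=
  ∃ (c : ZMod 2 → ZMod 2) (e : ZMod 2),
    ∀ (l : Fin L) (xs : Fin (l : ℕ) → ZMod 2) (i : ZMod 2),
      s' ⟨l, xs⟩ i = s ⟨l, fun j => xs j + e⟩ (i + e) + c i

namespace RE22

/-- The relabeling group: a flip `c` of outcomes and an exchange `e` of settings. -/
@[ext] structure G : Type where
  c : ZMod 2 → ZMod 2
  e : ZMod 2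
deriving DecidableEq

def gEquiv : G ≃ (ZMod 2 → ZMod 2) × ZMod 2 where
  toFun g := (g.c, g.e)
  invFun p := ⟨p.1, p.2⟩
  left_inv g := rfl
  right_inv p := rfl

instance : Fintype G := Fintype.ofEquiv _ gEquiv.symm

instance : Mul G := ⟨fun g1 g2 => ⟨fun i => g2.c (i + g1.e) + g1.c i, g1.e + g2.e⟩⟩
instance : One G := ⟨⟨fun _ => 0, 0⟩⟩
instance : Inv G := ⟨fun g => ⟨fun i => g.c (i + g.e), g.e⟩⟩

lemma mul_c (g1 g2 : G) : (g1 * g2).c = fun i => g2.c (i + g1.e) + g1.c i := rfl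
lemma mul_e (g1 g2 : G) : (g1 * g2).e = g1.e + g2.e := rfl
lemma one_c : (1 : G).c = fun _ => 0 := rfl
lemma one_e : (1 : G).e = 0 := rfl
lemma inv_c (g : G) : g⁻¹.c = fun i => g.c (i + g.e) := rfl
lemma inv_e (g : G) : g⁻¹.e = g.e := rfl

lemma zmod2_add_self' (x : ZMod 2) : x + x = 0 := by revert x; decide

instance : Group G :=
  Group.ofLeftAxioms
    (fun a b d => by
      refine G.ext ?_ ?_
      · funext i
        simp only [mul_c, mul_e, add_assoc]
      · simp only [mul_e, add_assoc])
    (fun a => by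
      refine G.ext ?_ ?_
      · funext i
        simp only [mul_c, mul_e, one_c, one_e, add_zero]
      · simp only [mul_e, one_e, zero_add])
    (fun a => by
      refine G.ext ?_ ?_
      · funext i
        simp only [mul_c, mul_e, one_c, inv_c, inv_e, zmod2_add_self']
      · simp only [mul_e, one_e, inv_e, zmod2_add_self'])

lemma card_G : Fintype.card G = 8 := by
  rw [Fintype.card_congr gEquiv]; decide

variable {L : ℕ}

instance : SMul G (DetStrategy22 L) :=
  ⟨fun g s => fun n i => s ⟨n.1, fun j => n.2 j + g.e⟩ (i + g.e) + g.c i⟩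

lemma smul_def (g : G) (s : DetStrategy22 L) (l : Fin L) (xs : Fin (l : ℕ) → ZMod 2)
    (i : ZMod 2) :
    (g • s) ⟨l, xs⟩ i = s ⟨l, fun j => xs j + g.e⟩ (i + g.e) + g.c i := rfl

instance : MulAction G (DetStrategy22 L) where
  one_smul s := by
    funext n i
    show s ⟨n.1, fun j => n.2 j + 0⟩ (i + 0) + 0 = s n i
    simp
  mul_smul g1 g2 s := by
    funext n i
    show s ⟨n.1, fun j => n.2 j + (g1.e + g2.e)⟩ (i + (g1.e + g2.e)) + (g2.c (i + g1.e) + g1.c i)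
      = s ⟨n.1, fun j => (n.2 j + g1.e) + g2.e⟩ ((i + g1.e) + g2.e) + g2.c (i + g1.e) + g1.c i
    simp [add_assoc]

lemma smul_eq_iff (g : G) (s : DetStrategy22 L) :
    g • s = s ↔ ∀ (l : Fin L) (xs : Fin (l : ℕ) → ZMod 2) (i : ZMod 2),
      s ⟨l, xs⟩ i = s ⟨l, fun j => xs j + g.e⟩ (i + g.e) + g.c i := by
  constructor
  · intro h l xs i
    conv_lhs => rw [← h]
    rfl
  · intro h
    funext n i
    rcases n with ⟨l, xs⟩
    rw [smul_def]
    exact (h l xs i).symm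

lemma requiv_iff (s s' : DetStrategy22 L) :
    REquiv22 L s s' ↔ ∃ g : G, g • s = s' := by
  constructor
  · rintro ⟨c, e, h⟩
    refine ⟨⟨c, e⟩, ?_⟩
    funext n i
    rcases n with ⟨l, xs⟩
    rw [smul_def]
    exact (h l xs i).symm
  · rintro ⟨g, rfl⟩
    exact ⟨g.c, g.e, fun l xs i => rfl⟩

lemma requiv_eq_orbitRel :
    REquiv22 L = fun s s' => MulAction.orbitRel G (DetStrategy22 L) s s' := by
  funext s s'
  apply propext
  rw [requiv_iff, MulAction.orbitRel_apply, MulAction.mem_orbit_iff]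
  constructor
  · rintro ⟨g, rfl⟩; exact ⟨g⁻¹, inv_smul_smul g s⟩
  · rintro ⟨g, rfl⟩; exact ⟨g⁻¹, inv_smul_smul g s'⟩

/-! ### Counting helpers -/

lemma sum_two_pow (n : ℕ) : ∑ i ∈ Finset.range n, 2 ^ i = 2 ^ n - 1 := by
  induction n with
  | zero => simp
  | succ n ih =>
    rw [Finset.sum_range_succ, ih, pow_succ]
    have : 1 ≤ 2 ^ n := Nat.one_le_two_pow
    omega

lemma card_binNode (L : ℕ) : Nat.card (BinNode L) = 2 ^ L - 1 := by
  rw [Nat.card_eq_fintype_card, Fintype.card_sigma]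
  have : ∀ l : Fin L, Fintype.card (Fin (l : ℕ) → ZMod 2) = 2 ^ (l : ℕ) := by
    intro l; simp [Fintype.card_fun]
  rw [Finset.sum_congr rfl (fun l _ => this l), Fin.sum_univ_eq_sum_range, sum_two_pow]

lemma card_strategies (L : ℕ) : Nat.card (DetStrategy22 L) = 4 ^ (2 ^ L - 1) := by
  rw [Nat.card_fun, card_binNode]
  norm_num [Nat.card_eq_fintype_card]

/-! ### Fixed points of elements with `e = 0` -/

lemma fixed_e0_c0 (g : G) (hg : g.c = 0) (he : g.e = 0) :
    Nat.card (MulAction.fixedBy (DetStrategy22 L) g) = 4 ^ (2 ^ L - 1) := by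
  have : MulAction.fixedBy (DetStrategy22 L) g = Set.univ := by
    apply Set.eq_univ_iff_forall.2
    intro s
    show g • s = s
    rw [smul_eq_iff]
    intro l xs i
    simp [hg, he]
  rw [this, ← card_strategies L]
  exact Nat.card_congr (Equiv.Set.univ _)

lemma fixed_e0_cne (hL : 1 ≤ L) (g : G) (hg : g.c ≠ 0) (he : g.e = 0) :
    Nat.card (MulAction.fixedBy (DetStrategy22 L) g) = 0 := by
  rw [Nat.card_eq_zero]
  left
  constructor
  rintro ⟨s, hs⟩
  apply hg
  funext i
  have h := (smul_eq_iff g s).1 hs ⟨0, hL⟩ (fun j => j.elim0) i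
  rw [he] at h
  simp only [add_zero] at h
  have h2 : s ⟨⟨0, hL⟩, fun j => j.elim0⟩ i = s ⟨⟨0, hL⟩, fun j => j.elim0⟩ i + g.c i := by
    convert h using 3
  have := h2.symm
  rw [left_eq_add] at h2
  exact h2

/-! ### Fixed points of elements with `e = 1` -/

lemma zmod2_cases (x : ZMod 2) : x = 0 ∨ x = 1 := by revert x; decide
lemma zmod2_ne0 {x : ZMod 2} (h : ¬ x = 0) : x = 1 := by revert x h; decide
lemma zmod2_add_self (x : ZMod 2) : x + x = 0 := by revert x; decide
lemma zmod2_add11 (x : ZMod 2) : x + 1 + 1 = x := by revert x; decide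
lemma zmod2_c_succ {c : ZMod 2 → ZMod 2} (hc : c 0 = c 1) (i : ZMod 2) :
    c (i + 1) = c i := by revert c i; decide

/-- the root node -/
def root (hL : 1 ≤ L) : BinNode L := ⟨⟨0, hL⟩, fun j => j.elim0⟩

lemma node_eq (l : Fin L) {xs xs' : Fin (l : ℕ) → ZMod 2} (h : ∀ j, xs j = xs' j) :
    (⟨l, xs⟩ : BinNode L) = ⟨l, xs'⟩ :=
  congrArg (Sigma.mk l) (funext h)

/-- root constraint: for `s` fixed by `⟨c,1⟩`, `f := s root` satisfies `f i = f (i+1) + c i`. -/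
lemma root_constraint (hL : 1 ≤ L) {c : ZMod 2 → ZMod 2} {s : DetStrategy22 L}
    (hs : (⟨c, 1⟩ : G) • s = s) (i : ZMod 2) :
    s (root hL) i = s (root hL) (i + 1) + c i := by
  have h := (smul_eq_iff _ s).1 hs ⟨0, hL⟩ (fun j => j.elim0) i
  have e : (⟨⟨0, hL⟩, fun j => (fun j' : Fin ((0 : ℕ)) => j'.elim0) j + 1⟩ : BinNode L)
      = root hL := node_eq _ (fun j => j.elim0)
  rw [e] at h
  exact h

lemma fixed_e1_cne (hL : 1 ≤ L) (g : G) (hg : ¬ g.c 0 = g.c 1) (he : g.e = 1) :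
    Nat.card (MulAction.fixedBy (DetStrategy22 L) g) = 0 := by
  rw [Nat.card_eq_zero]
  left
  constructor
  rintro ⟨s, hs⟩
  have hs' : (⟨g.c, 1⟩ : G) • s = s := by
    have : (⟨g.c, 1⟩ : G) = g := by ext <;> simp [he]
    rw [this]; exact hs
  have h0 := root_constraint hL hs' 0
  have h1 := root_constraint hL hs' 1
  apply hg
  have : s (root hL) 0 = s (root hL) 0 + (g.c 1 + g.c 0) := by
    conv_lhs => rw [h0]
    show s (root hL) 1 + g.c 0 = _
    conv_lhs => rw [h1]
    show s (root hL) (0 : ZMod 2) + g.c 1 + g.c 0 = _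
    rw [add_assoc]
  rw [left_eq_add] at this
  have := this
  revert this
  generalize g.c 1 = a; generalize g.c 0 = b
  revert a b; decide

section Half

variable (c : ZMod 2 → ZMod 2)

/-- The target root data. -/
abbrev RootT := {f : ZMod 2 → ZMod 2 // ∀ i, f i = f (i + 1) + c i}

lemma card_RootT (hc : c 0 = c 1) : Nat.card (RootT c) = 2 := by
  rw [Nat.card_eq_fintype_card]
  revert hc
  revert c
  decide

/-- strategy from root data plus data on half of the non-root nodes -/
def fromHalf (L : ℕ) (f : ZMod 2 → ZMod 2) (h : BinNode (L - 1) → ZMod 2 → ZMod 2) :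
    DetStrategy22 L := fun n =>
  match n with
  | ⟨⟨0, _⟩, _⟩ => f
  | ⟨⟨m+1, hm⟩, xs⟩ =>
    if xs ⟨0, Nat.succ_pos m⟩ = 0 then
      h ⟨⟨m, by omega⟩, fun j => xs j.succ⟩
    else fun i => h ⟨⟨m, by omega⟩, fun j => xs j.succ + 1⟩ (i + 1) + c i

/-- restriction to half of the non-root nodes -/
def toHalf (L : ℕ) (hL : 1 ≤ L) (s : DetStrategy22 L) (n : BinNode (L - 1)) :
    ZMod 2 → ZMod 2 :=
  s ⟨⟨(n.1 : ℕ) + 1, by have := n.1.isLt; omega⟩, Fin.cons 0 n.2⟩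

lemma fromHalf_fixed (hL : 1 ≤ L) (hc : c 0 = c 1) (f : ZMod 2 → ZMod 2)
    (hf : ∀ i, f i = f (i + 1) + c i) (h : BinNode (L - 1) → ZMod 2 → ZMod 2) :
    (⟨c, 1⟩ : G) • fromHalf c L f h = fromHalf c L f h := by
  rw [smul_eq_iff]
  rintro ⟨lv, hlv⟩ xs i
  match lv with
  | 0 => exact hf i
  | m + 1 =>
    show fromHalf c L f h ⟨⟨m+1, hlv⟩, xs⟩ i
        = fromHalf c L f h ⟨⟨m+1, hlv⟩, fun j => xs j + 1⟩ (i + 1) + c i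
    by_cases h0 : xs ⟨0, Nat.succ_pos m⟩ = 0
    · have h0' : ¬ ((fun j => xs j + 1) ⟨0, Nat.succ_pos m⟩ = 0) := by
        simp only [h0]; decide
      show (if xs ⟨0, Nat.succ_pos m⟩ = 0 then
            h ⟨⟨m, by omega⟩, fun j => xs j.succ⟩
          else fun i => h ⟨⟨m, by omega⟩, fun j => xs j.succ + 1⟩ (i + 1) + c i) i = _
      rw [if_pos h0]
      show _ = (if (fun j => xs j + 1) ⟨0, Nat.succ_pos m⟩ = 0 then
            h ⟨⟨m, by omega⟩, fun j => (fun j' => xs j' + 1) j.succ⟩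
          else fun i => h ⟨⟨m, by omega⟩, fun j => (fun j' => xs j' + 1) j.succ + 1⟩ (i + 1) + c i)
          (i + 1) + c i
      rw [if_neg h0']
      show h ⟨⟨m, _⟩, fun j => xs j.succ⟩ i
        = h ⟨⟨m, _⟩, fun j => xs j.succ + 1 + 1⟩ (i + 1 + 1) + c (i + 1) + c i
      have e1 : (⟨⟨m, by omega⟩, fun j => xs j.succ + 1 + 1⟩ : BinNode (L - 1))
          = ⟨⟨m, by omega⟩, fun j => xs j.succ⟩ := node_eq _ (fun j => zmod2_add11 _)
      rw [e1, zmod2_add11 i, zmod2_c_succ hc, add_assoc, zmod2_add_self, add_zero]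
    · show (if xs ⟨0, Nat.succ_pos m⟩ = 0 then
            h ⟨⟨m, by omega⟩, fun j => xs j.succ⟩
          else fun i => h ⟨⟨m, by omega⟩, fun j => xs j.succ + 1⟩ (i + 1) + c i) i = _
      rw [if_neg h0]
      have h0' : ((fun j => xs j + 1) ⟨0, Nat.succ_pos m⟩ = 0) := by
        show xs ⟨0, Nat.succ_pos m⟩ + 1 = 0
        rw [zmod2_ne0 h0]; decide
      show _ = (if (fun j => xs j + 1) ⟨0, Nat.succ_pos m⟩ = 0 then
            h ⟨⟨m, by omega⟩, fun j => (fun j' => xs j' + 1) j.succ⟩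
          else fun i => h ⟨⟨m, by omega⟩, fun j => (fun j' => xs j' + 1) j.succ + 1⟩ (i + 1) + c i)
          (i + 1) + c i
      rw [if_pos h0']

lemma fromHalf_zero (f : ZMod 2 → ZMod 2) (h : BinNode (L - 1) → ZMod 2 → ZMod 2)
    (hm : 0 < L) (xs : Fin ((⟨0, hm⟩ : Fin L) : ℕ) → ZMod 2) :
    fromHalf c L f h ⟨⟨0, hm⟩, xs⟩ = f := rfl

lemma fromHalf_succ (f : ZMod 2 → ZMod 2) (h : BinNode (L - 1) → ZMod 2 → ZMod 2)
    (m : ℕ) (hm : m + 1 < L) (xs : Fin (m + 1) → ZMod 2) :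
    fromHalf c L f h ⟨⟨m + 1, hm⟩, xs⟩ =
      if xs ⟨0, Nat.succ_pos m⟩ = 0 then
        h ⟨⟨m, by omega⟩, fun j => xs j.succ⟩
      else fun i => h ⟨⟨m, by omega⟩, fun j => xs j.succ + 1⟩ (i + 1) + c i := rfl

lemma fromHalf_root (hL : 1 ≤ L) (f : ZMod 2 → ZMod 2)
    (h : BinNode (L - 1) → ZMod 2 → ZMod 2) :
    fromHalf c L f h (root hL) = f := rfl

lemma toHalf_fromHalf (hL : 1 ≤ L) (f : ZMod 2 → ZMod 2)
    (h : BinNode (L - 1) → ZMod 2 → ZMod 2) :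
    toHalf L hL (fromHalf c L f h) = h := by
  funext n
  rcases n with ⟨⟨m, hm⟩, ys⟩
  show fromHalf c L f h ⟨⟨m + 1, by omega⟩, Fin.cons 0 ys⟩ = h ⟨⟨m, hm⟩, ys⟩
  have hz : (⟨0, Nat.succ_pos m⟩ : Fin (m + 1)) = 0 := Fin.ext (by simp)
  rw [fromHalf_succ]
  rw [if_pos (by rw [hz, Fin.cons_zero])]
  exact congrArg h (node_eq _ (fun j => Fin.cons_succ _ _ _))

lemma fromHalf_toHalf (hL : 1 ≤ L) (hc : c 0 = c 1) (s : DetStrategy22 L)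
    (hs : (⟨c, 1⟩ : G) • s = s) :
    fromHalf c L (s (root hL)) (toHalf L hL s) = s := by
  have P := (smul_eq_iff _ s).1 hs
  funext n
  rcases n with ⟨⟨lv, hlv⟩, xs⟩
  match lv with
  | 0 =>
    exact congrArg s (node_eq _ (fun j => j.elim0))
  | m + 1 =>
    have hz : (⟨0, Nat.succ_pos m⟩ : Fin (m + 1)) = 0 := Fin.ext (by simp)
    by_cases h0 : xs ⟨0, Nat.succ_pos m⟩ = 0
    · show (if xs ⟨0, Nat.succ_pos m⟩ = 0 then
            toHalf L hL s ⟨⟨m, by omega⟩, fun j => xs j.succ⟩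
          else fun i => toHalf L hL s ⟨⟨m, by omega⟩, fun j => xs j.succ + 1⟩ (i + 1) + c i)
          = s ⟨⟨m + 1, hlv⟩, xs⟩
      rw [if_pos h0]
      show s ⟨⟨m + 1, _⟩, Fin.cons 0 (fun j => xs j.succ)⟩ = s ⟨⟨m + 1, hlv⟩, xs⟩
      refine congrArg s (node_eq _ (fun j => ?_))
      refine Fin.cases ?_ (fun j' => ?_) j
      · rw [Fin.cons_zero, ← hz]
        exact h0.symm
      · rw [Fin.cons_succ]
    · funext i
      show (if xs ⟨0, Nat.succ_pos m⟩ = 0 then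
            toHalf L hL s ⟨⟨m, by omega⟩, fun j => xs j.succ⟩
          else fun i => toHalf L hL s ⟨⟨m, by omega⟩, fun j => xs j.succ + 1⟩ (i + 1) + c i) i
          = s ⟨⟨m + 1, hlv⟩, xs⟩ i
      rw [if_neg h0]
      show s ⟨⟨m + 1, _⟩, Fin.cons 0 (fun j => xs j.succ + 1)⟩ (i + 1) + c i
          = s ⟨⟨m + 1, hlv⟩, xs⟩ i
      rw [P ⟨m + 1, hlv⟩ xs i]
      congr 2
      refine (node_eq _ (fun j => ?_)).symm
      refine Fin.cases ?_ (fun j' => ?_) j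
      · rw [Fin.cons_zero, ← hz, zmod2_ne0 h0]
        exact zmod2_add_self' 1
      · rw [Fin.cons_succ]

lemma card_fixed_e1 (hL : 1 ≤ L) (hc : c 0 = c 1) :
    Nat.card (MulAction.fixedBy (DetStrategy22 L) (⟨c, 1⟩ : G))
      = 2 * 4 ^ (2 ^ (L - 1) - 1) := by
  have equiv : MulAction.fixedBy (DetStrategy22 L) (⟨c, 1⟩ : G) ≃
      RootT c × (BinNode (L - 1) → ZMod 2 → ZMod 2) :=
    { toFun := fun s => (⟨s.1 (root hL), fun i => root_constraint hL s.2 i⟩, toHalf L hL s.1)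
      invFun := fun p => ⟨fromHalf c L p.1.1 p.2, fromHalf_fixed c hL hc p.1.1 p.1.2 p.2⟩
      left_inv := fun s => Subtype.ext (fromHalf_toHalf c hL hc s.1 s.2)
      right_inv := fun p => by
        refine Prod.ext ?_ ?_
        · exact Subtype.ext (fromHalf_root c hL p.1.1 p.2)
        · exact toHalf_fromHalf c hL p.1.1 p.2 }
  rw [Nat.card_congr equiv, Nat.card_prod, card_RootT c hc, Nat.card_fun, card_binNode]
  norm_num [Nat.card_eq_fintype_card]

end Half

end RE22

/-- For `O = S = 2`, the number of equivalence classes of deterministic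
strategies of length `L` under relabeling of outcomes and of measurement
settings equals `(1/2)(4^(2^L - 2) + 4^(2^(L-1) - 1))`. -/
theorem card_RE_classes_22 (L : ℕ) (hL : 1 ≤ L) :
    2 * Nat.card (Quot (REquiv22 L)) =
      4 ^ (2 ^ L - 2) + 4 ^ (2 ^ (L - 1) - 1) := by
  classical
  letI : ∀ g : RE22.G, Fintype (MulAction.fixedBy (DetStrategy22 L) g) :=
    fun g => Fintype.ofFinite _
  letI : Fintype (MulAction.orbitRel.Quotient RE22.G (DetStrategy22 L)) := Fintype.ofFinite _
  have burnside := MulAction.sum_card_fixedBy_eq_card_orbits_mul_card_group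
    RE22.G (DetStrategy22 L)
  have hquot : Nat.card (Quot (REquiv22 L))
      = Fintype.card (MulAction.orbitRel.Quotient RE22.G (DetStrategy22 L)) := by
    rw [← Nat.card_eq_fintype_card]
    refine Nat.card_congr
      ((Quot.congrRight (fun a b => ?_)) :
        Quot (REquiv22 L) ≃ MulAction.orbitRel.Quotient RE22.G (DetStrategy22 L))
    rw [RE22.requiv_eq_orbitRel]
  have hfix : ∀ g : RE22.G, Fintype.card (MulAction.fixedBy (DetStrategy22 L) g)
      = (if g.e = 0 ∧ g.c = 0 then 4 ^ (2 ^ L - 1) else 0)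
        + (if ¬g.e = 0 ∧ g.c 0 = g.c 1 then 2 * 4 ^ (2 ^ (L - 1) - 1) else 0) := by
    intro g
    rcases RE22.zmod2_cases g.e with he | he
    · by_cases hcg : g.c = 0
      · rw [← Nat.card_eq_fintype_card, RE22.fixed_e0_c0 g hcg he]
        simp [he, hcg]
      · rw [← Nat.card_eq_fintype_card, RE22.fixed_e0_cne hL g hcg he]
        simp [he, hcg]
    · have he0 : ¬g.e = 0 := by rw [he]; decide
      by_cases hcg : g.c 0 = g.c 1
      · have hnc : Nat.card (MulAction.fixedBy (DetStrategy22 L) g)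
            = 2 * 4 ^ (2 ^ (L - 1) - 1) := by
          have hg : g = ⟨g.c, 1⟩ := RE22.G.ext rfl he
          rw [hg]
          exact RE22.card_fixed_e1 g.c hL hcg
        rw [← Nat.card_eq_fintype_card, hnc]
        simp [he0, hcg]
      · rw [← Nat.card_eq_fintype_card, RE22.fixed_e1_cne hL g hcg he]
        simp [he0, hcg]
  rw [Finset.sum_congr rfl (fun g _ => hfix g)] at burnside
  rw [Finset.sum_add_distrib, ← Finset.sum_filter, ← Finset.sum_filter,
    Finset.sum_const, Finset.sum_const, smul_eq_mul, smul_eq_mul, RE22.card_G] at burnside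
  have c1 : (Finset.univ.filter (fun g : RE22.G => g.e = 0 ∧ g.c = 0)).card = 1 := by
    decide
  have c2 : (Finset.univ.filter (fun g : RE22.G => ¬g.e = 0 ∧ g.c 0 = g.c 1)).card = 2 := by
    decide
  rw [c1, c2] at burnside
  have h2L : 2 ≤ 2 ^ L := by
    calc 2 = 2 ^ 1 := rfl
    _ ≤ 2 ^ L := Nat.pow_le_pow_right (by norm_num) hL
  have hA : 4 ^ (2 ^ L - 1) = 4 * 4 ^ (2 ^ L - 2) := by
    rw [show 2 ^ L - 1 = (2 ^ L - 2) + 1 by omega, pow_succ]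
    ring
  rw [hA] at burnside
  have key : 1 * (4 * 4 ^ (2 ^ L - 2)) + 2 * (2 * 4 ^ (2 ^ (L - 1) - 1))
      = Nat.card (Quot (REquiv22 L)) * 8 := by
    rw [hquot]; exact burnside
  omega
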